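/- Suppose the pair of degree sequences (D1, D2) is bigraphic, and let D1' be obtained from D1 by decreasing one entry d_j of D1 by 1 and increasing another entry d_i of D1 by 1, where d_i < d_j. Then (D1', D2) is also bigraphic. -/
import Mathlib


/-- A pair of degree sequences (given as multisets) is *bigraphic* if there is a simple
bipartite graph (encoded as its set of edges between the two vertex classes) whose
degree multisets on the two sides are exactly `D1` and `D2`. -/
def BigraphicM (D1 D2 : Multiset ℕ) : Prop :=
  ∃ E : Finset (Fin (Multiset.card D1) × Fin (Multiset.card D2)),
    D1 = Finset.univ.val.map (fun u => (E.filter (fun p => p.1 = u)).card) ∧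
    D2 = Finset.univ.val.map (fun v => (E.filter (fun p => p.2 = v)).card)

/-- If `(D1, D2)` is bigraphic, where `D1` contains entries `di < dj`, then the pair
obtained by increasing `di` by one and decreasing `dj` by one is also bigraphic. -/
theorem stmt8 (M D2 : Multiset ℕ) (di dj : ℕ) (h : di < dj)
    (hb : BigraphicM (di ::ₘ dj ::ₘ M) D2) :
    BigraphicM ((di + 1) ::ₘ (dj - 1) ::ₘ M) D2 := by
  unfold BigraphicM at hb ⊢
  rw [show Multiset.card ((di+1) ::ₘ (dj-1) ::ₘ M) = Multiset.card (di ::ₘ dj ::ₘ M) from by simp]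
  obtain ⟨E, h1, h2⟩ := hb
  obtain ⟨a, haU, hda, h1a⟩ := (Multiset.map_eq_cons _ Finset.univ.val _ _).mpr h1.symm
  obtain ⟨b, hbU, hdb, h1b⟩ := (Multiset.map_eq_cons _ (Finset.univ.val.erase a) _ _).mpr h1a
  have hnd : (Finset.univ.val : Multiset (Fin (Multiset.card (di ::ₘ dj ::ₘ M)))).Nodup :=
    Finset.univ.nodup
  have hab : b ≠ a := fun hba => (hnd.not_mem_erase) (hba ▸ hbU)
  have hne : ∀ u ∈ (Finset.univ.val.erase a).erase b, u ≠ a ∧ u ≠ b := by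
    intro u hu
    constructor
    · rintro rfl
      exact hnd.not_mem_erase (Multiset.mem_of_mem_erase hu)
    · rintro rfl
      exact (hnd.erase a).notMem_erase hu
  have hinj : ∀ c, Set.InjOn Prod.snd
      ((E.filter (fun p => p.1 = c) : Finset _) : Set (Fin (Multiset.card (di ::ₘ dj ::ₘ M)) × Fin (Multiset.card D2))) := by
    intro c p hp q hq hpq
    simp only [Finset.coe_filter, Set.mem_setOf_eq] at hp hq
    exact Prod.ext (hp.2.trans hq.2.symm) hpq
  have hcNa : ((E.filter (fun p => p.1 = a)).image Prod.snd).card = di := by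
    rw [Finset.card_image_of_injOn (hinj a)]; exact hda
  have hcNb : ((E.filter (fun p => p.1 = b)).image Prod.snd).card = dj := by
    rw [Finset.card_image_of_injOn (hinj b)]; exact hdb
  have hns : ¬ (E.filter (fun p => p.1 = b)).image Prod.snd ⊆
      (E.filter (fun p => p.1 = a)).image Prod.snd :=
    fun hs => absurd (Finset.card_le_card hs) (by omega)
  obtain ⟨v, hvNb, hvNa⟩ := Finset.not_subset.mp hns
  have hbv : (b, v) ∈ E := by
    obtain ⟨p, hp, hpv⟩ := Finset.mem_image.mp hvNb
    obtain ⟨hpE, hp1⟩ := Finset.mem_filter.mp hp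
    have hp' : p = (b, v) := Prod.ext hp1 hpv
    rwa [hp'] at hpE
  have hav : (a, v) ∉ E := fun hE =>
    hvNa (Finset.mem_image.mpr ⟨(a, v), Finset.mem_filter.mpr ⟨hE, rfl⟩, rfl⟩)
  refine ⟨insert (a, v) (E.erase (b, v)), ?_, ?_⟩
  · -- first coordinate degrees
    have key : ∀ u,
        ((insert (a, v) (E.erase (b, v))).filter (fun p => p.1 = u)).card =
        if u = a then (E.filter (fun p => p.1 = a)).card + 1
        else if u = b then (E.filter (fun p => p.1 = b)).card - 1
        else (E.filter (fun p => p.1 = u)).card := by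
      intro u
      rw [Finset.filter_insert, Finset.filter_erase]
      by_cases hua : u = a
      · rw [if_pos hua.symm, if_pos hua]
        have hb1 : (b, v) ∉ E.filter (fun p => p.1 = u) := by simp [hua, hab]
        rw [Finset.erase_eq_of_notMem hb1]
        have hb2 : (a, v) ∉ E.filter (fun p => p.1 = u) :=
          fun hx => hav (Finset.mem_filter.mp hx).1
        rw [Finset.card_insert_of_notMem hb2, hua]
      · rw [if_neg (fun hx => hua hx.symm), if_neg hua]
        by_cases hub : u = b
        · rw [if_pos hub]
          have hb1 : (b, v) ∈ E.filter (fun p => p.1 = u) := by simp [hbv, hub]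
          rw [Finset.card_erase_of_mem hb1, hub]
        · rw [if_neg hub]
          have hb1 : (b, v) ∉ E.filter (fun p => p.1 = u) := by
            simp only [Finset.mem_filter, not_and]
            exact fun _ hx => hub hx.symm
          rw [Finset.erase_eq_of_notMem hb1]
    calc (di + 1) ::ₘ (dj - 1) ::ₘ M
        = ((E.filter (fun p => p.1 = a)).card + 1) ::ₘ
          ((E.filter (fun p => p.1 = b)).card - 1) ::ₘ
          Multiset.map (fun u => (E.filter (fun p => p.1 = u)).card)
            ((Finset.univ.val.erase a).erase b) := by rw [hda, hdb, h1b]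
      _ = Multiset.map
            (fun u => ((insert (a, v) (E.erase (b, v))).filter (fun p => p.1 = u)).card)
            (a ::ₘ b ::ₘ (Finset.univ.val.erase a).erase b) := by
            rw [Multiset.map_cons, Multiset.map_cons, key a, key b,
              if_pos rfl, if_pos rfl, if_neg hab]
            congr 1
            congr 1
            refine (Multiset.map_congr rfl ?_).symm
            intro u hu
            rw [key u, if_neg (hne u hu).1, if_neg (hne u hu).2]
      _ = Multiset.map _ Finset.univ.val := by
            rw [Multiset.cons_erase hbU, Multiset.cons_erase haU]
  · -- second coordinate degrees
    have key : ∀ w,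
        ((insert (a, v) (E.erase (b, v))).filter (fun p => p.2 = w)).card =
        (E.filter (fun p => p.2 = w)).card := by
      intro w
      rw [Finset.filter_insert, Finset.filter_erase]
      by_cases hwv : v = w
      · subst hwv
        rw [if_pos rfl]
        have hb1 : (b, v) ∈ E.filter (fun p => p.2 = v) := by simp [hbv]
        have hb2 : (a, v) ∉ (E.filter (fun p => p.2 = v)).erase (b, v) :=
          fun hx => hav (Finset.mem_filter.mp (Finset.mem_of_mem_erase hx)).1
        rw [Finset.card_insert_of_notMem hb2, Finset.card_erase_of_mem hb1]
        have : 0 < (E.filter (fun p => p.2 = v)).card := Finset.card_pos.mpr ⟨_, hb1⟩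
        omega
      · rw [if_neg hwv]
        have hb1 : (b, v) ∉ E.filter (fun p => p.2 = w) := by simp [hwv]
        rw [Finset.erase_eq_of_notMem hb1]
    exact h2.trans (Multiset.map_congr rfl (fun w _ => (key w).symm))
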